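/- Let f : F_2^k → S be a function with image {f₁, …, f_E} of size E, and t ≥ 1. Then r^f_ID(k, t) ≤ N^(2)_ID(I_f^(2)(t, f₁, …, f_E); k), where I_f^(2)(t, f₁, …, f_E) is the function distance matrix of f. -/
import Mathlib


/-- Length of a longest common subsequence of two binary words. -/
noncomputable def lcsLen (x y : List Bool) : ℕ :=
  sSup {n | ∃ z : List Bool, z.length = n ∧ z.Sublist x ∧ z.Sublist y}

/-- The insdel distance `d_ID(x,y) = |x| + |y| - 2·LCS(x,y)`. -/
noncomputable def dID (x y : List Bool) : ℕ :=
  x.length + y.length - 2 * lcsLen x y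

/-- Number of runs (maximal blocks of consecutive equal symbols) of a binary word. -/
def runs (x : List Bool) : ℕ := (x.destutter (· ≠ ·)).length

/-- Maximum run length of a binary word: the largest `n` such that some constant
word of length `n` occurs as a block of consecutive symbols of `x`. -/
noncomputable def maxRun (x : List Bool) : ℕ :=
  sSup {n | ∃ b : Bool, (List.replicate n b).IsInfix x}

/-- `D_t(x)`: the words of length `|x| - t` that are subsequences of `x`. -/
def Dset (t : ℕ) (x : List Bool) : Set (List Bool) :=
  {z | z.length = x.length - t ∧ z.Sublist x}

/-- `I_t(x)`: the words of length `|x| + t` that are supersequences of `x`. -/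
def Iset (t : ℕ) (x : List Bool) : Set (List Bool) :=
  {z | z.length = x.length + t ∧ x.Sublist z}

/-- A systematic encoding `x ↦ (x, p(x))` with redundancy words `p x` of length `r`
is a function-correcting insdel code for `f` correcting `t` insdel errors. -/
noncomputable def IsFCIDC {k : ℕ} {S : Type*} (f : (Fin k → Bool) → S) (t r : ℕ)
    (p : (Fin k → Bool) → List Bool) : Prop :=
  (∀ x, (p x).length = r) ∧
  ∀ x y, f x ≠ f y → 2 * t < dID (List.ofFn x ++ p x) (List.ofFn y ++ p y)

/-- The optimal redundancy `r^f_ID(k,t)`. -/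
noncomputable def optRed {k : ℕ} {S : Type*} (f : (Fin k → Bool) → S) (t : ℕ) : ℕ :=
  sInf {r | ∃ p, IsFCIDC f t r p}

/-- `p` is an irregular insdel-distance code of length `r` for the matrix `I`. -/
noncomputable def IsIrregularCode {M : ℕ} (I : Fin M → Fin M → ℕ) (r : ℕ)
    (p : Fin M → List Bool) : Prop :=
  (∀ i, (p i).length = r) ∧ ∀ i j, I i j ≤ dID (p i) (p j)

/-- `N^(1)_ID(I)`: least length of an irregular insdel-distance code for `I`. -/
noncomputable def N1 {M : ℕ} (I : Fin M → Fin M → ℕ) : ℕ :=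
  sInf {r | ∃ p, IsIrregularCode I r p}

/-- `N^(2)_ID(I; K)`: least length `r ≥ K` of an irregular insdel-distance code for `I`. -/
noncomputable def N2 {M : ℕ} (I : Fin M → Fin M → ℕ) (K : ℕ) : ℕ :=
  sInf {r | K ≤ r ∧ ∃ p, IsIrregularCode I r p}

-- The insdel distance matrix `I_f^(1)(t, x₁, …, x_M)`.
open Classical in
noncomputable def Imat1 {k M : ℕ} {S : Type*} (f : (Fin k → Bool) → S) (t : ℕ)
    (x : Fin M → Fin k → Bool) : Fin M → Fin M → ℕ :=
  fun i j => if f (x i) ≠ f (x j) then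
    2 * t + 2 - dID (List.ofFn (x i)) (List.ofFn (x j)) else 0

-- The insdel distance matrix `I_f^(2)(t, x₁, …, x_M)`.
open Classical in
noncomputable def Imat2 {k M : ℕ} {S : Type*} (f : (Fin k → Bool) → S) (t : ℕ)
    (x : Fin M → Fin k → Bool) : Fin M → Fin M → ℕ :=
  fun i j => if f (x i) ≠ f (x j) then
    2 * t + 2 + 2 * k - dID (List.ofFn (x i)) (List.ofFn (x j)) else 0

/-- The function distance `d^f_ID(a,b)`. -/
noncomputable def dfID {k : ℕ} {S : Type*} (f : (Fin k → Bool) → S) (a b : S) : ℕ :=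
  sInf {d | ∃ x y : Fin k → Bool, f x = a ∧ f y = b ∧ dID (List.ofFn x) (List.ofFn y) = d}

/-- The function distance matrix `I_f^(2)(t, f₁, …, f_E)`, with entries
`max(2(t+1+k) − d^f_ID(f_i, f_j), 0)` off the diagonal and `0` on the diagonal. -/
noncomputable def funMat2 {k E : ℕ} {S : Type*} (f : (Fin k → Bool) → S) (t : ℕ)
    (fs : Fin E → S) : Fin E → Fin E → ℕ :=
  fun i j => if i = j then 0 else 2 * (t + 1 + k) - dfID f (fs i) (fs j)

/-- The uniform `M × M` matrix with off-diagonal entries `d` and zero diagonal. -/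
def uniMat (M d : ℕ) : Fin M → Fin M → ℕ := fun i j => if i = j then 0 else d

/-- The number-of-runs function on `F_2^k`. -/
def runsFn (k : ℕ) (x : Fin k → Bool) : ℕ := runs (List.ofFn x)

/-- The VT-syndrome function `f(x) = Σ_{j=1}^k j·x_j mod (k+1)`. -/
def vtFn (k : ℕ) (x : Fin k → Bool) : ℕ :=
  (∑ j : Fin k, ((j : ℕ) + 1) * (if x j then 1 else 0)) % (k + 1)

/-- The function ball `B^f_ID(u, ρ) = f(B_ID(u, ρ))`. -/
def fball {k : ℕ} {S : Type*} (f : (Fin k → Bool) → S) (u : Fin k → Bool) (ρ : ℕ) : Set S :=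
  f '' {v : Fin k → Bool | dID (List.ofFn u) (List.ofFn v) ≤ ρ}

/-- `V_ID(r, d)`: the maximum size of an insdel ball of (integer) radius `d`
among centers in `F_2^r`. -/
noncomputable def Vid (r : ℕ) (d : ℤ) : ℕ :=
  sSup (Set.range fun x : Fin r → Bool =>
    Nat.card {y : Fin r → Bool | (dID (List.ofFn x) (List.ofFn y) : ℤ) ≤ d})

section Aux

lemma lcs_bdd (x y : List Bool) :
    BddAbove {n | ∃ z : List Bool, z.length = n ∧ z.Sublist x ∧ z.Sublist y} :=
  ⟨x.length, fun _ ⟨_, hz, hx, _⟩ => hz ▸ hx.length_le⟩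

lemma lcs_spec (x y : List Bool) :
    ∃ z : List Bool, z.length = lcsLen x y ∧ z.Sublist x ∧ z.Sublist y :=
  Nat.sSup_mem (⟨0, by exact ⟨[], rfl, List.nil_sublist _, List.nil_sublist _⟩⟩) (lcs_bdd x y)

lemma le_lcs {z x y : List Bool} (hx : z.Sublist x) (hy : z.Sublist y) :
    z.length ≤ lcsLen x y :=
  le_csSup (lcs_bdd x y) ⟨z, rfl, hx, hy⟩

lemma lcs_le_left (x y : List Bool) : lcsLen x y ≤ x.length := by
  obtain ⟨z, hz, hx, _⟩ := lcs_spec x y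
  exact hz ▸ hx.length_le

lemma lcs_append (x y p q : List Bool) :
    lcsLen (x ++ p) (y ++ q) ≤ lcsLen x y + max x.length y.length + lcsLen p q := by
  obtain ⟨z, hz, h1, h2⟩ := lcs_spec (x ++ p) (y ++ q)
  rw [List.sublist_append_iff] at h1 h2
  obtain ⟨z1, z2, hz12, hz1, hz2⟩ := h1
  obtain ⟨w1, w2, hw12, hw1, hw2⟩ := h2
  have he : z1 ++ z2 = w1 ++ w2 := by rw [← hz12, ← hw12]
  rcases List.append_eq_append_iff.mp he with ⟨m, hm1, hm2⟩ | ⟨m, hm1, hm2⟩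
  · -- w1 = z1 ++ m, z2 = m ++ w2
    have hz1y : z1.Sublist y := ((List.sublist_append_left z1 m).trans (hm1 ▸ hw1))
    have hmy : m.length ≤ y.length :=
      (((List.sublist_append_right z1 m).trans (hm1 ▸ hw1))).length_le
    have hw2p : w2.Sublist p := (List.sublist_append_right m w2).trans (hm2 ▸ hz2)
    have hzl : z.length = z1.length + (m.length + w2.length) := by
      rw [hz12, hm2]; simp
    have e1 : z1.length ≤ lcsLen x y := le_lcs hz1 hz1y
    have e2 : w2.length ≤ lcsLen p q := le_lcs hw2p hw2
    have := le_max_right x.length y.length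
    omega
  · -- z1 = w1 ++ m, w2 = m ++ z2
    have hw1x : w1.Sublist x := ((List.sublist_append_left w1 m).trans (hm1 ▸ hz1))
    have hmx : m.length ≤ x.length :=
      (((List.sublist_append_right w1 m).trans (hm1 ▸ hz1))).length_le
    have hz2q : z2.Sublist q := (List.sublist_append_right m z2).trans (hm2 ▸ hw2)
    have hzl : z.length = w1.length + (m.length + z2.length) := by
      rw [hw12, hm2]; simp
    have e1 : w1.length ≤ lcsLen x y := le_lcs hw1x hw1
    have e2 : z2.length ≤ lcsLen p q := le_lcs hz2 hz2q
    have := le_max_left x.length y.length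
    omega

lemma lcs_step (a a' b b' : ℕ) :
    lcsLen (List.replicate a false ++ List.replicate a' true)
      (List.replicate b false ++ List.replicate b' true) ≤ min a b + min a' b' := by
  obtain ⟨z, hz, h1, h2⟩ := lcs_spec (List.replicate a false ++ List.replicate a' true)
    (List.replicate b false ++ List.replicate b' true)
  rw [List.sublist_append_iff] at h1 h2
  obtain ⟨z1, z2, hz12, hz1, hz2⟩ := h1
  obtain ⟨w1, w2, hw12, hw1, hw2⟩ := h2
  obtain ⟨c, hca, hc⟩ := List.sublist_replicate_iff.mp hz1
  obtain ⟨c', hca', hc'⟩ := List.sublist_replicate_iff.mp hz2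
  obtain ⟨d, hdb, hd⟩ := List.sublist_replicate_iff.mp hw1
  obtain ⟨d', hdb', hd'⟩ := List.sublist_replicate_iff.mp hw2
  have he : List.replicate c false ++ List.replicate c' true
      = List.replicate d false ++ List.replicate d' true := by
    rw [← hc, ← hc', ← hd, ← hd', ← hz12, ← hw12]
  have h0 : c = d := by
    have := congrArg (List.count false) he
    simpa [List.count_append, List.count_replicate] using this
  have h0' : c' = d' := by
    have := congrArg (List.count true) he
    simpa [List.count_append, List.count_replicate] using this
  have hzl : z.length = c + c' := by rw [hz12, hc, hc']; simp
  omega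

end Aux

lemma lcs_comm (x y : List Bool) : lcsLen x y = lcsLen y x := by
  unfold lcsLen
  congr 1
  ext n
  simp only [Set.mem_setOf_eq]
  exact ⟨fun ⟨z, h1, h2, h3⟩ => ⟨z, h1, h3, h2⟩, fun ⟨z, h1, h2, h3⟩ => ⟨z, h1, h3, h2⟩⟩

lemma dID_comm (x y : List Bool) : dID x y = dID y x := by
  simp [dID, lcs_comm x y, Nat.add_comm]

theorem stmt7 {S : Type*} (k t E : ℕ) (ht : 1 ≤ t) (f : (Fin k → Bool) → S)
    (fs : Fin E → S) (hinj : Function.Injective fs)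
    (hrange : Set.range fs = Set.range f) :
    optRed f t ≤ N2 (funMat2 f t fs) k := by
  classical
  set D : ℕ := 2 * (t + 1 + k) with hD
  set r0 : ℕ := k + E * D with hr0
  -- a crude irregular code showing the N2-set is nonempty
  have key : ∀ u v : ℕ, u + D ≤ v → v ≤ E * D →
      D ≤ dID (List.replicate (r0 - u) false ++ List.replicate u true)
        (List.replicate (r0 - v) false ++ List.replicate v true) := by
    intro u v huv hvE
    have hvr : v ≤ r0 := by omega
    have hL := lcs_step (r0 - u) u (r0 - v) v
    simp only [dID, List.length_append, List.length_replicate]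
    omega
  have hne : {r | k ≤ r ∧ ∃ p, IsIrregularCode (funMat2 f t fs) r p}.Nonempty := by
    refine ⟨r0, by omega, fun i => List.replicate (r0 - (i : ℕ) * D) false
      ++ List.replicate ((i : ℕ) * D) true, ?_, ?_⟩
    · intro i
      have : (i : ℕ) * D ≤ E * D := Nat.mul_le_mul_right D (le_of_lt i.isLt)
      simp only [List.length_append, List.length_replicate]
      omega
    · intro i j
      by_cases hij : i = j
      · simp [funMat2, hij]
      · have hent : funMat2 f t fs i j ≤ D := by
          simp only [funMat2, if_neg hij, hD]
          omega
        have hvij : (i : ℕ) ≠ (j : ℕ) := fun h => hij (Fin.ext h)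
        rcases Nat.lt_or_ge (i : ℕ) (j : ℕ) with h | h
        · have h1 : (i : ℕ) * D + D ≤ (j : ℕ) * D := by
            have := Nat.mul_le_mul_right D h
            calc (i : ℕ) * D + D = ((i : ℕ) + 1) * D := by ring
            _ ≤ (j : ℕ) * D := Nat.mul_le_mul_right D h
          exact hent.trans (key _ _ h1 (Nat.mul_le_mul_right D (le_of_lt j.isLt)))
        · have hlt : (j : ℕ) < (i : ℕ) := lt_of_le_of_ne h (Ne.symm hvij)
          have h1 : (j : ℕ) * D + D ≤ (i : ℕ) * D := by
            calc (j : ℕ) * D + D = ((j : ℕ) + 1) * D := by ring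
            _ ≤ (i : ℕ) * D := Nat.mul_le_mul_right D hlt
          have := key _ _ h1 (Nat.mul_le_mul_right D (le_of_lt i.isLt))
          have hcomm : dID (List.replicate (r0 - (j : ℕ) * D) false ++ List.replicate ((j : ℕ) * D) true)
              (List.replicate (r0 - (i : ℕ) * D) false ++ List.replicate ((i : ℕ) * D) true)
              = dID (List.replicate (r0 - (i : ℕ) * D) false ++ List.replicate ((i : ℕ) * D) true)
              (List.replicate (r0 - (j : ℕ) * D) false ++ List.replicate ((j : ℕ) * D) true) :=
            dID_comm _ _
          rw [hcomm] at this
          exact hent.trans this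
  obtain ⟨hkN, q, hqlen, hqd⟩ := Nat.sInf_mem hne
  set N : ℕ := N2 (funMat2 f t fs) k with hNdef
  have hmem : ∀ x : Fin k → Bool, f x ∈ Set.range fs := by
    intro x; rw [hrange]; exact ⟨x, rfl⟩
  have hidx : ∀ x, fs (hmem x).choose = f x := fun x => (hmem x).choose_spec
  refine Nat.sInf_le ⟨fun x => q (hmem x).choose, fun x => hqlen _, ?_⟩
  intro x y hxy
  show 2 * t < dID (List.ofFn x ++ q (hmem x).choose) (List.ofFn y ++ q (hmem y).choose)
  set i := (hmem x).choose with hi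
  set j := (hmem y).choose with hj
  have hx' : fs i = f x := (hmem x).choose_spec
  have hy' : fs j = f y := (hmem y).choose_spec
  have hij : i ≠ j := by
    intro h
    exact hxy (by rw [← hx', h, hy'])
  have h2 := hqd i j
  simp only [funMat2, if_neg hij, hx', hy'] at h2
  have h1 : dfID f (f x) (f y) ≤ dID (List.ofFn x) (List.ofFn y) :=
    Nat.sInf_le ⟨x, y, rfl, rfl, rfl⟩
  have hsplit := lcs_append (List.ofFn x) (List.ofFn y) (q i) (q j)
  have hA : lcsLen (List.ofFn x) (List.ofFn y) ≤ k := by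
    have := lcs_le_left (List.ofFn x) (List.ofFn y)
    simpa using this
  have hB : lcsLen (q i) (q j) ≤ N := by
    have := lcs_le_left (q i) (q j)
    rwa [hqlen i] at this
  simp only [dID, List.length_append, List.length_ofFn, hqlen] at h1 h2 hsplit ⊢
  omega
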